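/- Let X be a binomial random variable with parameters n and p, where n p ≥ 2 and n(1−p) ≥ 2. Then P(X > n p) > 0.25587 > 1/4. -/

import Mathlib

open Finset

/-- Upper tail of the binomial distribution. -/
noncomputable def binTail (n k0 : ℕ) (x : ℝ) : ℝ :=
  ∑ k ∈ Finset.Icc k0 n, (n.choose k : ℝ) * x ^ k * (1 - x) ^ (n - k)

lemma hasDerivAt_binTail (n k0 : ℕ) (hk0 : 1 ≤ k0) (hk0n : k0 ≤ n) (x : ℝ) :
    HasDerivAt (binTail n k0)
      ((k0 : ℝ) * (n.choose k0 : ℝ) * x ^ (k0 - 1) * (1 - x) ^ (n - k0)) x := by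
  set A : ℕ → ℝ := fun k => (k : ℝ) * (n.choose k : ℝ) * x ^ (k - 1) * (1 - x) ^ (n - k) with hA
  have key : ∀ k ∈ Finset.Icc k0 n,
      HasDerivAt (fun t : ℝ => (n.choose k : ℝ) * t ^ k * (1 - t) ^ (n - k))
        (A k - A (k + 1)) x := by
    intro k hk
    simp only [Finset.mem_Icc] at hk
    have h1 : HasDerivAt (fun t : ℝ => t ^ k) ((k : ℝ) * x ^ (k - 1)) x := hasDerivAt_pow k x
    have h2 : HasDerivAt (fun t : ℝ => (1 - t) ^ (n - k))
        (((n - k : ℕ) : ℝ) * (1 - x) ^ (n - k - 1) * (-1)) x := by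
      have hb : HasDerivAt (fun t : ℝ => 1 - t) (-1) x := by
        simpa using (hasDerivAt_id x).const_sub 1
      exact (hasDerivAt_pow (n - k) (1 - x)).comp x hb
    have h3 : HasDerivAt (fun t : ℝ => (n.choose k : ℝ) * t ^ k * (1 - t) ^ (n - k)) _ x :=
      ((h1.const_mul ((n.choose k : ℝ))).mul h2)
    convert h3 using 1
    have hchoose : ((n.choose (k+1) : ℝ)) * ((k:ℝ)+1) = (n.choose k : ℝ) * ((n:ℝ) - (k:ℝ)) := by
      have := Nat.choose_succ_right_eq n k
      have hcast := congrArg (fun z : ℕ => (z : ℝ)) this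
      push_cast at hcast
      rw [Nat.cast_sub hk.2] at hcast
      push_cast at hcast
      linarith [hcast]
    rcases eq_or_lt_of_le hk.2 with h | h
    · subst h
      simp [hA, Nat.choose_succ_self, Nat.sub_self]
    · have hkn : k + 1 ≤ n := h
      have e1 : n - k - 1 = n - (k + 1) := by omega
      have e2 : (k + 1) - 1 = k := by omega
      have e3 : ((n - k : ℕ) : ℝ) = (n : ℝ) - (k : ℝ) := by
        rw [Nat.cast_sub hk.2]
      simp only [hA, e1, e2, e3]
      push_cast
      linear_combination (-(x ^ k * (1 - x) ^ (n - (k + 1)))) * hchoose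
  have hsum : HasDerivAt (binTail n k0) (∑ k ∈ Finset.Icc k0 n, (A k - A (k + 1))) x := by
    have := HasDerivAt.fun_sum key
    exact this
  have htel : ∑ k ∈ Finset.Icc k0 n, (A k - A (k + 1)) = A k0 - A (n + 1) := by
    rw [← Finset.Ico_add_one_right_eq_Icc, Finset.sum_Ico_eq_sum_range]
    have := Finset.sum_range_sub' (fun i => A (k0 + i)) (n.succ - k0)
    simp only [← Nat.add_assoc] at this
    have e : k0 + (n.succ - k0) = n + 1 := by omega
    rw [e] at this
    rw [Nat.add_zero] at this
    exact this
  rw [htel] at hsum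
  have hAtop : A (n + 1) = 0 := by
    simp [hA, Nat.choose_succ_self]
  rw [hAtop, sub_zero] at hsum
  exact hsum



lemma continuous_binTail (n k0 : ℕ) : Continuous (binTail n k0) := by
  unfold binTail
  exact continuous_finset_sum _ fun k _ =>
    ((continuous_const.mul (continuous_pow k)).mul
      (((continuous_const.sub continuous_id)).pow (n - k)))

lemma binTail_succ (n j : ℕ) (hj : j ≤ n) (x : ℝ) :
    binTail (n + 1) (j + 1) x = x * binTail n j x + (1 - x) * binTail n (j + 1) x := by
  unfold binTail
  have hmap : Finset.Icc (j + 1) (n + 1) = (Finset.Icc j n).map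
      ⟨fun i => i + 1, add_left_injective 1⟩ := by
    ext k
    simp [Finset.mem_map]
    constructor
    · intro h; exact ⟨k - 1, by omega, by omega⟩
    · rintro ⟨a, ha, rfl⟩; omega
  rw [hmap, Finset.sum_map]
  simp only [Function.Embedding.coeFn_mk]
  have step : ∀ i ∈ Finset.Icc j n,
      ((n + 1).choose (i + 1) : ℝ) * x ^ (i + 1) * (1 - x) ^ (n + 1 - (i + 1))
      = x * ((n.choose i : ℝ) * x ^ i * (1 - x) ^ (n - i))
        + (n.choose (i + 1) : ℝ) * x ^ (i + 1) * (1 - x) ^ (n - (i + 1) + 1) := by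
    intro i hi
    simp only [Finset.mem_Icc] at hi
    have hc : ((n + 1).choose (i + 1) : ℝ) = (n.choose i : ℝ) + (n.choose (i + 1) : ℝ) := by
      rw [Nat.choose_succ_succ]; push_cast; ring
    have he : n + 1 - (i + 1) = n - i := by omega
    rcases eq_or_lt_of_le hi.2 with h | h
    · subst h
      simp [Nat.choose_succ_self, he]
      ring
    · have he2 : n - i = n - (i + 1) + 1 := by omega
      rw [hc, he, he2]
      ring
  rw [Finset.sum_congr rfl step, Finset.sum_add_distrib, ← Finset.mul_sum]
  congr 1
  have hre : ∑ i ∈ Finset.Icc j n, ((n.choose (i+1) : ℝ) * x ^ (i+1) * (1-x) ^ (n-(i+1)+1))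
      = ∑ k ∈ Finset.Icc (j+1) (n+1), ((n.choose k : ℝ) * x ^ k * (1-x) ^ (n-k+1)) := by
    rw [hmap, Finset.sum_map]
    simp only [Function.Embedding.coeFn_mk]
  rw [hre, Finset.sum_Icc_succ_top (by omega : j + 1 ≤ n + 1)]
  simp only [Nat.choose_succ_self, Nat.cast_zero, zero_mul, add_zero]
  rw [Finset.mul_sum]
  apply Finset.sum_congr rfl
  intro k hk
  rw [pow_succ]
  ring



lemma binTail_split (n m : ℕ) (h : m ≤ n) (x : ℝ) :
    binTail n m x = (n.choose m : ℝ) * x ^ m * (1 - x) ^ (n - m) + binTail n (m + 1) x := by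
  unfold binTail
  have : Finset.Icc m n = insert m (Finset.Icc (m + 1) n) := by
    ext k; simp [Finset.mem_insert]; omega
  rw [this, Finset.sum_insert (by simp)]

lemma binTail_step (m n : ℕ) (hm : 1 ≤ m) (hn : m + 2 ≤ n) :
    binTail n (m + 1) ((m : ℝ) / n) ≤ binTail (n + 1) (m + 1) ((m : ℝ) / (n + 1)) := by
  have hn0 : (0 : ℝ) < n := by
    have : 0 < n := by omega
    exact_mod_cast this
  have hn1 : (0 : ℝ) < (n : ℝ) + 1 := by positivity
  set F : ℝ → ℝ := fun s =>
    ((m : ℝ) - n * s) * binTail n m s + (1 - (m : ℝ) + n * s) * binTail n (m + 1) s with hFdef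
  have hab : (m : ℝ) / (n + 1) ≤ (m : ℝ) / n := by
    apply div_le_div_of_nonneg_left (by positivity) hn0
    linarith
  -- F is antitone on [m/(n+1), m/n]
  have hanti : AntitoneOn F (Set.Icc ((m : ℝ) / (n + 1)) ((m : ℝ) / n)) := by
    apply antitoneOn_of_deriv_nonpos (convex_Icc _ _)
    · exact (((continuous_const.sub (continuous_const.mul continuous_id)).mul
        (continuous_binTail n m)).add
        ((continuous_const.add (continuous_const.mul continuous_id)).mul
        (continuous_binTail n (m + 1)))).continuousOn
    · intro x hx
      have h1 : HasDerivAt (fun s : ℝ => (m : ℝ) - n * s) (-(n : ℝ)) x := by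
        simpa using ((hasDerivAt_id x).const_mul (n : ℝ)).const_sub (m : ℝ)
      have h2 : HasDerivAt (fun s : ℝ => 1 - (m : ℝ) + n * s) ((n : ℝ)) x := by
        simpa using (((hasDerivAt_id x).const_mul (n : ℝ)).const_add (1 - (m : ℝ)))
      exact (((h1.mul (hasDerivAt_binTail n m hm (by omega) x)).add
        (h2.mul (hasDerivAt_binTail n (m + 1) (by omega) (by omega) x))).differentiableAt).differentiableWithinAt
    · intro x hx
      rw [interior_Icc, Set.mem_Ioo] at hx
      have hx0 : 0 < x := lt_of_le_of_lt (by positivity) hx.1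
      have hx1 : x < 1 := by
        refine lt_of_lt_of_le hx.2 ?_
        rw [div_le_one hn0]
        have : (m : ℝ) + 2 ≤ n := by exact_mod_cast hn
        linarith
      have h1 : HasDerivAt (fun s : ℝ => (m : ℝ) - n * s) (-(n : ℝ)) x := by
        simpa using ((hasDerivAt_id x).const_mul (n : ℝ)).const_sub (m : ℝ)
      have h2 : HasDerivAt (fun s : ℝ => 1 - (m : ℝ) + n * s) ((n : ℝ)) x := by
        simpa using (((hasDerivAt_id x).const_mul (n : ℝ)).const_add (1 - (m : ℝ)))
      have hD := (h1.mul (hasDerivAt_binTail n m hm (by omega) x)).add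
        (h2.mul (hasDerivAt_binTail n (m + 1) (by omega) (by omega) x))
      rw [(show HasDerivAt F _ x from hD).deriv]
      -- now show the derivative value is ≤ 0
      have hsplit := binTail_split n m (by omega) x
      have hC : ((m : ℝ) + 1) * (n.choose (m + 1) : ℝ) = ((n : ℝ) - m) * (n.choose m : ℝ) := by
        have := Nat.choose_succ_right_eq n m
        have hcast := congrArg (fun z : ℕ => (z : ℝ)) this
        push_cast [Nat.cast_sub (by omega : m ≤ n)] at hcast
        linarith
      have he1 : n - m = (n - m - 1) + 1 := by omega
      have he2 : n - (m + 1) = n - m - 1 := by omega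
      have he3 : m = (m - 1) + 1 := by omega
      have hxm : x ^ m = x ^ (m - 1) * x := by
        conv_lhs => rw [he3]
        rw [pow_succ]
      have hbm : (1 - x) ^ (n - m) = (1 - x) ^ (n - m - 1) * (1 - x) := by
        conv_lhs => rw [he1]
        rw [pow_succ]
      have key : -(n : ℝ) * binTail n m x + ((m : ℝ) - n * x) *
            ((m : ℝ) * (n.choose m : ℝ) * x ^ (m - 1) * (1 - x) ^ (n - m))
          + ((n : ℝ) * binTail n (m + 1) x + (1 - (m : ℝ) + n * x) *
            (((m : ℝ) + 1) * (n.choose (m + 1) : ℝ) * x ^ m * (1 - x) ^ (n - (m + 1))))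
          = (n.choose m : ℝ) * x ^ (m - 1) * (1 - x) ^ (n - m - 1) *
            (((n : ℝ) * x - m) * (((n : ℝ) + 1) * x - m)) := by
        rw [hsplit, he2, hxm, hbm]
        linear_combination ((1 - (m : ℝ) + n * x) * (x ^ (m - 1) * x) * (1 - x) ^ (n - m - 1)) * hC
      push_cast
      push_cast at key
      rw [key]
      have f1 : (0 : ℝ) ≤ (n.choose m : ℝ) * x ^ (m - 1) * (1 - x) ^ (n - m - 1) := by
        have h1x : (0:ℝ) ≤ 1 - x := by linarith
        have := pow_nonneg h1x (n - m - 1)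
        have := pow_nonneg hx0.le (m - 1)
        positivity
      have f2 : (n : ℝ) * x - m ≤ 0 := by
        have := hx.2
        rw [lt_div_iff₀ hn0] at this
        linarith
      have f3 : 0 ≤ ((n : ℝ) + 1) * x - m := by
        have := hx.1
        rw [div_lt_iff₀ hn1] at this
        linarith
      have := mul_nonpos_of_nonpos_of_nonneg f2 f3
      exact mul_nonpos_of_nonneg_of_nonpos f1 this
  -- endpoint values
  have hFa : F ((m : ℝ) / n) = binTail n (m + 1) ((m : ℝ) / n) := by
    have e1 : (m : ℝ) - n * ((m : ℝ) / n) = 0 := by field_simp; ring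
    have e2 : 1 - (m : ℝ) + n * ((m : ℝ) / n) = 1 := by field_simp; ring
    simp [hFdef, e1, e2]
  have hFb : F ((m : ℝ) / (n + 1)) = binTail (n + 1) (m + 1) ((m : ℝ) / (n + 1)) := by
    rw [binTail_succ n m (by omega)]
    have e1 : (m : ℝ) - n * ((m : ℝ) / (n + 1)) = (m : ℝ) / (n + 1) := by field_simp; ring
    have e2 : 1 - (m : ℝ) + n * ((m : ℝ) / (n + 1)) = 1 - (m : ℝ) / (n + 1) := by
      field_simp
      ring
    simp only [hFdef, e1, e2]
  calc binTail n (m + 1) ((m : ℝ) / n) = F ((m : ℝ) / n) := hFa.symm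
    _ ≤ F ((m : ℝ) / (n + 1)) := by
        apply hanti (Set.mem_Icc.mpr ⟨le_refl _, hab⟩) (Set.mem_Icc.mpr ⟨hab, le_refl _⟩) hab
    _ = _ := hFb



lemma binTail_monotoneOn (n k0 : ℕ) (hk0 : 1 ≤ k0) (hk0n : k0 ≤ n) :
    MonotoneOn (binTail n k0) (Set.Icc (0 : ℝ) 1) := by
  apply monotoneOn_of_deriv_nonneg (convex_Icc _ _) (continuous_binTail n k0).continuousOn
  · exact fun x _ => ((hasDerivAt_binTail n k0 hk0 hk0n x).differentiableAt).differentiableWithinAt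
  · intro x hx
    rw [interior_Icc, Set.mem_Ioo] at hx
    rw [(hasDerivAt_binTail n k0 hk0 hk0n x).deriv]
    have h1 : (0:ℝ) ≤ x := hx.1.le
    have h2 : (0:ℝ) ≤ 1 - x := by linarith [hx.2]
    have := pow_nonneg h1 (k0 - 1)
    have := pow_nonneg h2 (n - k0)
    positivity

lemma binTail_mono_n (m : ℕ) (hm : 1 ≤ m) : ∀ n, m + 2 ≤ n →
    binTail (m + 2) (m + 1) ((m : ℝ) / (m + 2)) ≤ binTail n (m + 1) ((m : ℝ) / n) := by
  intro n hn
  induction n, hn using Nat.le_induction with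
  | base =>
      apply le_of_eq
      norm_num
  | succ n hn ih =>
      calc binTail (m + 2) (m + 1) ((m : ℝ) / (m + 2)) ≤ binTail n (m + 1) ((m : ℝ) / n) := ih
        _ ≤ _ := by
            have := binTail_step m n hm hn
            push_cast at this ⊢
            convert this using 3 <;> push_cast <;> ring

lemma binTail_base (m : ℕ) (hm : 2 ≤ m) :
    binTail (m + 2) (m + 1) ((m : ℝ) / (m + 2))
      = ((m : ℝ) / (m + 2)) ^ (m + 1) * ((3 * m + 4) / (m + 2)) := by
  unfold binTail
  have h2 : Finset.Icc (m + 1) (m + 2) = {m + 1, m + 2} := by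
    ext k; simp; omega
  rw [h2, Finset.sum_insert (by simp), Finset.sum_singleton]
  have c1 : (m + 2).choose (m + 1) = m + 2 := by
    rw [Nat.choose_succ_self_right]
  have c2 : (m + 2).choose (m + 2) = 1 := Nat.choose_self _
  have e1 : m + 2 - (m + 1) = 1 := by omega
  have e2 : m + 2 - (m + 2) = 0 := by omega
  rw [c1, c2, e1, e2]
  have hm2 : ((m : ℝ) + 2) ≠ 0 := by positivity
  have hx : 1 - (m : ℝ) / (m + 2) = 2 / (m + 2) := by field_simp; ring
  rw [hx]
  push_cast
  rw [pow_succ]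
  field_simp
  ring_nf
  field_simp
  ring


lemma exp_nine_quarters_lt : Real.exp (9/4 : ℝ) < 9.49 := by
  have h4 : Real.exp (9/4 : ℝ) ^ (4 : ℕ) = Real.exp 9 := by
    rw [← Real.exp_nat_mul]; norm_num
  have h9 : Real.exp (9 : ℝ) = Real.exp 1 ^ (9 : ℕ) := by
    rw [← Real.exp_nat_mul]; norm_num
  have he : Real.exp 1 < 2.7182818286 := Real.exp_one_lt_d9
  have hb : Real.exp (9 : ℝ) < 2.7182818286 ^ (9 : ℕ) := by
    rw [h9]
    exact pow_lt_pow_left₀ he (Real.exp_pos 1).le (by norm_num)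
  have hfin : Real.exp (9/4 : ℝ) ^ (4 : ℕ) < (9.49 : ℝ) ^ (4 : ℕ) := by
    rw [h4]
    calc Real.exp (9:ℝ) < 2.7182818286 ^ (9:ℕ) := hb
      _ < (9.49 : ℝ) ^ (4 : ℕ) := by norm_num
  exact lt_of_pow_lt_pow_left₀ 4 (by norm_num) hfin

lemma base_bound (m : ℕ) (hm : 2 ≤ m) :
    (0.25587 : ℝ) < ((m : ℝ) / (m + 2)) ^ (m + 1) * ((3 * m + 4) / (m + 2)) := by
  rcases le_or_gt m 7 with h7 | h7
  · interval_cases m <;> norm_num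
  · have hm8 : 8 ≤ m := h7
    have hm0 : (0:ℝ) < m := by positivity
    have hm0' : (8:ℝ) ≤ m := by exact_mod_cast hm8
    have hm2 : (0:ℝ) < (m:ℝ) + 2 := by positivity
    -- (1 + 2/m)^(m+1) ≤ exp(9/4) < 9.49
    have h1 : ((m : ℝ) + 2) / m ≤ Real.exp (2 / m) := by
      have := Real.add_one_le_exp (2 / (m:ℝ))
      have e : ((m : ℝ) + 2) / m = 2 / m + 1 := by field_simp; ring
      linarith [e ▸ this]
    have h2 : (((m : ℝ) + 2) / m) ^ (m + 1) ≤ Real.exp (2 / m) ^ (m + 1) :=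
      pow_le_pow_left₀ (by positivity) h1 (m + 1)
    have h3 : Real.exp (2 / m) ^ (m + 1) = Real.exp (((m : ℝ) + 1) * (2 / m)) := by
      rw [← Real.exp_nat_mul]
      push_cast
      ring_nf
    have h4 : ((m : ℝ) + 1) * (2 / m) ≤ 9/4 := by
      rw [mul_div_assoc', div_le_div_iff₀ hm0 (by norm_num : (0:ℝ) < 4)]
      nlinarith
    have h5 : (((m : ℝ) + 2) / m) ^ (m + 1) < 9.49 := by
      calc (((m : ℝ) + 2) / m) ^ (m + 1) ≤ Real.exp (((m : ℝ) + 1) * (2 / m)) := h3 ▸ h2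
        _ ≤ Real.exp (9/4) := Real.exp_le_exp.mpr h4
        _ < 9.49 := exp_nine_quarters_lt
    have hpos : (0:ℝ) < (((m : ℝ) + 2) / m) ^ (m + 1) := by positivity
    have h6 : ((m : ℝ) / (m + 2)) ^ (m + 1) = ((((m : ℝ) + 2) / m) ^ (m + 1))⁻¹ := by
      rw [← inv_pow]
      congr 1
      rw [inv_div]
    have h7' : (9.49 : ℝ)⁻¹ < ((m : ℝ) / (m + 2)) ^ (m + 1) := by
      rw [h6]
      exact inv_strictAnti₀ hpos h5
    have h8 : (5/2 : ℝ) ≤ (3 * (m:ℝ) + 4) / (m + 2) := by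
      rw [le_div_iff₀ hm2]
      nlinarith
    calc (0.25587 : ℝ) < (9.49 : ℝ)⁻¹ * (5/2) := by norm_num
      _ ≤ ((m : ℝ) / (m + 2)) ^ (m + 1) * ((3 * m + 4) / (m + 2)) := by
          apply mul_le_mul h7'.le h8 (by norm_num) (by positivity)

/-- If `n p ≥ 2` and `n(1-p) ≥ 2`, then `P(X > n p) > 0.25587 > 1/4`. -/
theorem binomial_prob_gt_mean_main_case
    (n : ℕ) (p : ℝ) (hp0 : 0 < p) (hp1 : p < 1)
    (h1 : 2 ≤ (n : ℝ) * p) (h2 : 2 ≤ (n : ℝ) * (1 - p)) :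
    (0.25587 : ℝ) <
      (∑ k ∈ (Finset.range (n + 1)).filter (fun k : ℕ => (n : ℝ) * p < (k : ℝ)),
        (n.choose k : ℝ) * p ^ k * (1 - p) ^ (n - k)) ∧
    (1 : ℝ) / 4 < (0.25587 : ℝ) := by
  refine ⟨?_, by norm_num⟩
  have hnp0 : 0 ≤ (n : ℝ) * p := by linarith
  set m := ⌊(n : ℝ) * p⌋₊ with hmdef
  have hm2 : 2 ≤ m := Nat.le_floor (by exact_mod_cast h1)
  have hm1 : 1 ≤ m := by omega
  have hfl : (m : ℝ) ≤ (n : ℝ) * p := Nat.floor_le hnp0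
  have hn0 : 0 < n := by
    rcases Nat.eq_zero_or_pos n with h | h
    · subst h; norm_num at h1
    · exact h
  have hnR : (0 : ℝ) < n := by exact_mod_cast hn0
  have hmn : m + 2 ≤ n := by
    have hr : (m : ℝ) + 2 ≤ n := by nlinarith
    exact_mod_cast hr
  -- rewrite the sum as binTail n (m+1) p
  have hset : (Finset.range (n + 1)).filter (fun k : ℕ => (n : ℝ) * p < (k : ℝ))
      = Finset.Icc (m + 1) n := by
    ext k
    simp only [Finset.mem_filter, Finset.mem_range, Finset.mem_Icc]
    constructor
    · rintro ⟨hk1, hk2⟩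
      have : m < k := by
        rw [hmdef]
        exact (Nat.floor_lt hnp0).mpr hk2
      omega
    · rintro ⟨hk1, hk2⟩
      refine ⟨by omega, ?_⟩
      have : m < k := by omega
      calc (n : ℝ) * p < m + 1 := by
            have := Nat.lt_floor_add_one ((n : ℝ) * p)
            push_cast at this ⊢
            linarith
        _ ≤ k := by exact_mod_cast this
  rw [hset]
  have hsum : ∑ k ∈ Finset.Icc (m + 1) n, (n.choose k : ℝ) * p ^ k * (1 - p) ^ (n - k)
      = binTail n (m + 1) p := rfl
  rw [hsum]
  -- monotonicity in p
  have hmem1 : (m : ℝ) / n ∈ Set.Icc (0 : ℝ) 1 := by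
    constructor
    · positivity
    · rw [div_le_one hnR]
      have : (m : ℝ) + 2 ≤ n := by exact_mod_cast hmn
      linarith
  have hmem2 : p ∈ Set.Icc (0 : ℝ) 1 := ⟨hp0.le, hp1.le⟩
  have hle : (m : ℝ) / n ≤ p := by
    rw [div_le_iff₀ hnR]
    linarith
  have step1 : binTail n (m + 1) ((m : ℝ) / n) ≤ binTail n (m + 1) p :=
    binTail_monotoneOn n (m + 1) (by omega) (by omega) hmem1 hmem2 hle
  have step2 : binTail (m + 2) (m + 1) ((m : ℝ) / (m + 2)) ≤ binTail n (m + 1) ((m : ℝ) / n) :=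
    binTail_mono_n m hm1 n hmn
  have step3 := binTail_base m hm2
  have step4 := base_bound m hm2
  rw [step3] at step2
  linarith
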